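/- Strict close-connectedness and shifted strict close-connectedness relative to the closely connected subspace are equivalent: let (P_1, ..., P_d, U = [[A, B], [C, D]]) be a GR-unitary colligation, and let N, N' and H_cc be the subspaces of H defined in the context. Then the following are equivalent: (1) H_cc ∩ N = {0} (the strictly-closely-connected subspace N^⊥ equals H_cc); (2) H_cc ∩ N' = {0} (the shifted strictly-closely-connected subspace (N')^⊥ equals H_cc); (3) P_k N ⊆ N and P_k N' ⊆ N' for every k ∈ {1, ..., d}. -/

import Mathlib

open ContinuousLinearMap

noncomputable section

variable {d : ℕ} {H E F : Type*}
  [NormedAddCommGroup H] [InnerProductSpace ℂ H] [CompleteSpace H]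
  [NormedAddCommGroup E] [InnerProductSpace ℂ E] [CompleteSpace E]
  [NormedAddCommGroup F] [InnerProductSpace ℂ F] [CompleteSpace F]

/-- `A^w = P_{i_N} A P_{i_{N-1}} A ⋯ P_{i_1} A` for a word `w = i_N i_{N-1} ⋯ i_1`. -/
def grWord (A : H →L[ℂ] H) (P : Fin d → H →L[ℂ] H) {N : ℕ} (w : Fin N → Fin d) :
    H →L[ℂ] H :=
  (List.ofFn fun j => P (w j) * A).prod

/-- The abelianized Givone–Roesser functional calculus `(A^𝔞)^n = ∑_{𝔞(w) = n} A^w`. -/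
def grAb (A : H →L[ℂ] H) (P : Fin d → H →L[ℂ] H) (n : Fin d → ℕ) : H →L[ℂ] H :=
  ∑ w ∈ Finset.univ.filter
      (fun w : Fin (∑ k, n k) → Fin d =>
        ∀ k, (Finset.univ.filter fun j => w j = k).card = n k),
    grWord A P w

/-- The kernel `N` of the de Branges–Rovnyak map
`h ↦ [C(I - Z(z)A)⁻¹ h ; B*(I - Z(z)⁻¹A*)⁻¹ Z(z)⁻¹ h]`, expressed through Laurent
coefficients. -/
def sccKer (A : H →L[ℂ] H) (P : Fin d → H →L[ℂ] H) (B : E →L[ℂ] H) (C : H →L[ℂ] F) :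
    Set H :=
  {h | (∀ n : Fin d → ℕ, C (grAb A P n h) = 0) ∧
    ∀ m : Fin d → ℕ,
      (∑ k ∈ Finset.univ.filter fun k => 1 ≤ m k,
        adjoint B (grAb (adjoint A) P (fun j => m j - if j = k then 1 else 0) (P k h)))
      = 0}

/-- The kernel `N'` of the shifted de Branges–Rovnyak map
`h ↦ [C(I - Z(z)A)⁻¹ Z(z) h ; B*(I - Z(z)⁻¹A*)⁻¹ h]`, expressed through Laurent
coefficients. -/
def ssccKer (A : H →L[ℂ] H) (P : Fin d → H →L[ℂ] H) (B : E →L[ℂ] H) (C : H →L[ℂ] F) :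
    Set H :=
  {h | (∀ m : Fin d → ℕ,
      (∑ k ∈ Finset.univ.filter fun k => 1 ≤ m k,
        C (grAb A P (fun j => m j - if j = k then 1 else 0) (P k h))) = 0) ∧
    ∀ n : Fin d → ℕ, adjoint B (grAb (adjoint A) P n h) = 0}

/-- `H_cc`: the smallest closed subspace of `H` containing `ran B` and `ran C*` and
invariant under `A`, `A*` and each `P_k`. -/
def ccSpace (A : H →L[ℂ] H) (P : Fin d → H →L[ℂ] H) (B : E →L[ℂ] H) (C : H →L[ℂ] F) :
    Submodule ℂ H :=
  sInf {M : Submodule ℂ H | IsClosed (M : Set H) ∧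
    LinearMap.range (B : E →ₗ[ℂ] H) ≤ M ∧ LinearMap.range (adjoint C : F →ₗ[ℂ] H) ≤ M ∧
    (∀ x ∈ M, A x ∈ M) ∧ (∀ x ∈ M, adjoint A x ∈ M) ∧ ∀ k, ∀ x ∈ M, P k x ∈ M}

set_option linter.unusedSectionVars false

def grAbL (A : H →L[ℂ] H) (P : Fin d → H →L[ℂ] H) (M : ℕ) (n : Fin d → ℕ) : H →L[ℂ] H :=
  ∑ w ∈ Finset.univ.filter
      (fun w : Fin M → Fin d =>
        ∀ k, (Finset.univ.filter fun j => w j = k).card = n k),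
    grWord A P w

lemma grAb_eq_grAbL (A : H →L[ℂ] H) (P : Fin d → H →L[ℂ] H) (n : Fin d → ℕ) :
    grAb A P n = grAbL A P (∑ k, n k) n := rfl

lemma grAbL_congr (A : H →L[ℂ] H) (P : Fin d → H →L[ℂ] H) {M M' : ℕ} (h : M = M')
    (n : Fin d → ℕ) : grAbL A P M n = grAbL A P M' n := by subst h; rfl

lemma grAbL_zero (A : H →L[ℂ] H) (P : Fin d → H →L[ℂ] H) :
    grAbL A P 0 (fun _ => 0) = 1 := by
  rw [grAbL, Finset.filter_true_of_mem (fun w _ => by simp), Finset.univ_unique,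
    Finset.sum_singleton]
  simp [grWord, List.ofFn_zero]

lemma grAb_zero (A : H →L[ℂ] H) (P : Fin d → H →L[ℂ] H) :
    grAb A P (fun _ => 0) = 1 := by
  have h : grAbL A P (∑ k : Fin d, (fun _ : Fin d => (0:ℕ)) k) (fun _ => 0)
      = grAbL A P 0 (fun _ => 0) := grAbL_congr A P (by simp) _
  rw [grAb_eq_grAbL, h, grAbL_zero]

lemma grWord_snoc (A : H →L[ℂ] H) (P : Fin d → H →L[ℂ] H) {M : ℕ} (v : Fin M → Fin d)
    (k : Fin d) : grWord A P (Fin.snoc v k) = grWord A P v * (P k * A) := by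
  unfold grWord
  rw [List.ofFn_succ']
  simp [Fin.snoc_castSucc, Fin.snoc_last, mul_assoc]

lemma count_snoc {M : ℕ} (v : Fin M → Fin d) (k k' : Fin d) :
    (Finset.univ.filter fun j : Fin (M+1) => (@Fin.snoc M (fun _ => Fin d) v k j) = k').card
      = (Finset.univ.filter fun j : Fin M => v j = k').card + if k = k' then 1 else 0 := by
  simp only [Finset.card_filter]
  rw [Fin.sum_univ_castSucc]
  simp [Fin.snoc_castSucc, Fin.snoc_last]

lemma grAbL_succ' (A : H →L[ℂ] H) (P : Fin d → H →L[ℂ] H) (M : ℕ) (m : Fin d → ℕ) :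
    grAbL A P (M+1) m = ∑ k ∈ Finset.univ.filter (fun k => 1 ≤ m k),
      grAbL A P M (fun j => m j - if j = k then 1 else 0) * (P k * A) := by
  unfold grAbL
  simp_rw [Finset.sum_mul]
  rw [Finset.sum_sigma']
  refine Finset.sum_nbij' (fun w => ⟨w (Fin.last M), Fin.init w⟩)
    (fun p => Fin.snoc p.2 p.1) ?_ ?_ ?_ ?_ ?_
  · intro w hw
    simp only [Finset.mem_filter, Finset.mem_univ, true_and] at hw
    simp only [Finset.mem_sigma, Finset.mem_filter, Finset.mem_univ, true_and]
    have hcount : ∀ k', (Finset.univ.filter fun j : Fin (M+1) => w j = k').card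
        = (Finset.univ.filter fun j : Fin M => Fin.init w j = k').card
          + if w (Fin.last M) = k' then 1 else 0 := by
      intro k'
      conv_lhs => rw [← Fin.snoc_init_self w]
      exact count_snoc _ _ _
    constructor
    · have h1 := hw (w (Fin.last M))
      have h2 := hcount (w (Fin.last M))
      rw [if_pos rfl] at h2
      omega
    · intro k'
      have h1 := hw k'
      have h2 := hcount k'
      by_cases hkk : k' = w (Fin.last M)
      · subst hkk; rw [if_pos rfl] at h2 ⊢; omega
      · rw [if_neg (fun h => hkk h.symm)] at h2
        rw [if_neg hkk]
        omega
  · rintro ⟨k, v⟩ hp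
    simp only [Finset.mem_sigma, Finset.mem_filter, Finset.mem_univ, true_and] at hp
    obtain ⟨hk, hv⟩ := hp
    simp only [Finset.mem_filter, Finset.mem_univ, true_and]
    intro k'
    rw [count_snoc, hv k']
    by_cases hkk : k = k'
    · subst hkk; rw [if_pos rfl]; omega
    · rw [if_neg hkk, if_neg (fun h => hkk h.symm)]
      omega
  · intro w _
    exact Fin.snoc_init_self w
  · rintro ⟨k, v⟩ _
    simp [Fin.snoc_last, Fin.init_snoc]
  · intro w _
    conv_lhs => rw [← Fin.snoc_init_self w]
    exact grWord_snoc A P _ _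

lemma sum_sub_ite (m : Fin d → ℕ) (k : Fin d) (hk : 1 ≤ m k) :
    ∑ j, (m j - if j = k then 1 else 0) = (∑ j, m j) - 1 := by
  rw [Finset.sum_tsub_distrib _ (fun j _ => by by_cases h : j = k <;> simp [h, hk])]
  congr 1
  rw [Finset.sum_ite_eq' Finset.univ k (fun _ => 1)]
  simp

lemma grAb_decomp (A : H →L[ℂ] H) (P : Fin d → H →L[ℂ] H) (m : Fin d → ℕ)
    (hm : 1 ≤ ∑ k, m k) (x : H) :
    grAb A P m x = ∑ k ∈ Finset.univ.filter (fun k => 1 ≤ m k),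
      grAb A P (fun j => m j - if j = k then 1 else 0) (P k (A x)) := by
  obtain ⟨M, hM⟩ : ∃ M, ∑ k, m k = M + 1 := ⟨(∑ k, m k) - 1, by omega⟩
  rw [grAb_eq_grAbL, grAbL_congr A P hM, grAbL_succ', ContinuousLinearMap.sum_apply]
  refine Finset.sum_congr rfl fun k hk => ?_
  simp only [Finset.mem_filter, Finset.mem_univ, true_and] at hk
  rw [grAb_eq_grAbL, grAbL_congr A P (by rw [sum_sub_ite m k hk, hM]; omega : (∑ j, (m j - if j = k then 1 else 0)) = M)]
  rfl

section Lemmas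

variable (P : Fin d → H →L[ℂ] H) (A : H →L[ℂ] H) (B : E →L[ℂ] H) (C : H →L[ℂ] F)
  (D : E →L[ℂ] F)

lemma grWord_mem {K : Submodule ℂ H} (hA : ∀ x ∈ K, A x ∈ K)
    (hP : ∀ k, ∀ x ∈ K, P k x ∈ K) :
    ∀ {M : ℕ} (w : Fin M → Fin d) (x : H), x ∈ K → grWord A P w x ∈ K := by
  intro M
  induction M with
  | zero => intro w x hx; simpa [grWord] using hx
  | succ M ih =>
    intro w x hx
    have hsp : grWord A P w x = P (w 0) (A (grWord A P (fun i => w i.succ) x)) := by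
      rw [grWord, List.ofFn_succ, List.prod_cons]
      rfl
    rw [hsp]
    exact hP _ _ (hA _ (ih _ _ hx))

lemma grAb_mem {K : Submodule ℂ H} (hA : ∀ x ∈ K, A x ∈ K)
    (hP : ∀ k, ∀ x ∈ K, P k x ∈ K) (n : Fin d → ℕ) (x : H) (hx : x ∈ K) :
    grAb A P n x ∈ K := by
  rw [grAb, ContinuousLinearMap.sum_apply]
  exact Submodule.sum_mem K fun w _ => grWord_mem P A hA hP w x hx

lemma sum_proj_apply (hPsum : ∑ k, P k = 1) (x : H) : ∑ k, P k x = x := by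
  have := congrArg (fun (T : H →L[ℂ] H) => T x) hPsum
  simpa [ContinuousLinearMap.sum_apply] using this

lemma scc_zero : (0 : H) ∈ sccKer A P B C :=
  ⟨fun n => by simp, fun m => by simp⟩

lemma sscc_zero : (0 : H) ∈ ssccKer A P B C :=
  ⟨fun m => by simp, fun n => by simp⟩

lemma scc_sub {x y : H} (hx : x ∈ sccKer A P B C) (hy : y ∈ sccKer A P B C) :
    x - y ∈ sccKer A P B C := by
  refine ⟨fun n => ?_, fun m => ?_⟩
  · simp only [map_sub, hx.1 n, hy.1 n, sub_zero]
  · simp only [map_sub, Finset.sum_sub_distrib, hx.2 m, hy.2 m, sub_zero]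

lemma sscc_sub {x y : H} (hx : x ∈ ssccKer A P B C) (hy : y ∈ ssccKer A P B C) :
    x - y ∈ ssccKer A P B C := by
  refine ⟨fun m => ?_, fun n => ?_⟩
  · simp only [map_sub, Finset.sum_sub_distrib, hx.1 m, hy.1 m, sub_zero]
  · simp only [map_sub, hx.2 n, hy.2 n, sub_zero]

lemma scc_C {h : H} (hh : h ∈ sccKer A P B C) : C h = 0 := by
  have := hh.1 (fun _ => 0)
  rwa [grAb_zero, ContinuousLinearMap.one_apply] at this

lemma sscc_B {h : H} (hh : h ∈ ssccKer A P B C) : adjoint B h = 0 := by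
  have := hh.2 (fun _ => 0)
  rwa [grAb_zero, ContinuousLinearMap.one_apply] at this

lemma filter_single (j : Fin d) :
    (Finset.univ.filter fun k => 1 ≤ (if k = j then 1 else 0 : ℕ)) = {j} := by
  ext k
  simp only [Finset.mem_filter, Finset.mem_univ, true_and, Finset.mem_singleton]
  by_cases h : k = j <;> simp [h]

lemma sub_ite_self (j : Fin d) :
    (fun i => (if i = j then 1 else 0 : ℕ) - if i = j then 1 else 0) = fun _ => 0 := by
  funext i; omega

lemma scc_Bproj {h : H} (hh : h ∈ sccKer A P B C) (j : Fin d) :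
    adjoint B (P j h) = 0 := by
  have h2 := hh.2 (fun i => if i = j then 1 else 0)
  rw [filter_single, Finset.sum_singleton] at h2
  rwa [sub_ite_self, grAb_zero, ContinuousLinearMap.one_apply] at h2

lemma scc_B (hPsum : ∑ k, P k = 1) {h : H} (hh : h ∈ sccKer A P B C) :
    adjoint B h = 0 := by
  conv_lhs => rw [← sum_proj_apply P hPsum h]
  rw [map_sum]
  exact Finset.sum_eq_zero fun j _ => scc_Bproj P A B C hh j

lemma sscc_Cproj {h : H} (hh : h ∈ ssccKer A P B C) (j : Fin d) :
    C (P j h) = 0 := by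
  have h2 := hh.1 (fun i => if i = j then 1 else 0)
  rw [filter_single, Finset.sum_singleton] at h2
  rwa [sub_ite_self, grAb_zero, ContinuousLinearMap.one_apply] at h2

lemma sscc_C (hPsum : ∑ k, P k = 1) {h : H} (hh : h ∈ ssccKer A P B C) :
    C h = 0 := by
  conv_lhs => rw [← sum_proj_apply P hPsum h]
  rw [map_sum]
  exact Finset.sum_eq_zero fun j _ => sscc_Cproj P A B C hh j

end Lemmas

section Main

variable (P : Fin d → H →L[ℂ] H) (A : H →L[ℂ] H) (B : E →L[ℂ] H) (C : H →L[ℂ] F)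
  (D : E →L[ℂ] F)

lemma filter_empty_of (m : Fin d → ℕ) (hm : ¬ 1 ≤ ∑ k, m k) :
    (Finset.univ.filter fun k => 1 ≤ m k) = ∅ := by
  have h0 : ∑ k, m k = 0 := by omega
  have := Finset.sum_eq_zero_iff.mp h0
  ext k
  simp only [Finset.mem_filter, Finset.mem_univ, true_and, Finset.notMem_empty, iff_false]
  have := this k (Finset.mem_univ k)
  omega

lemma eq_zero_fun_of (n : Fin d → ℕ) (hn : ¬ 1 ≤ ∑ k, n k) : n = fun _ => 0 := by
  have h0 : ∑ k, n k = 0 := by omega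
  exact funext fun k => Finset.sum_eq_zero_iff.mp h0 k (Finset.mem_univ k)

lemma mem_sscc_of_A
    (hU4 : adjoint A * A + adjoint C ∘L C = 1)
    (hU5 : adjoint A ∘L B + adjoint C ∘L D = 0)
    {h : H} (hh : h ∈ sccKer A P B C) : A h ∈ ssccKer A P B C := by
  have hCh : C h = 0 := scc_C P A B C hh
  have hadj5 : adjoint B ∘L A + adjoint D ∘L C = 0 := by
    have := congrArg (ContinuousLinearMap.adjoint) hU5
    simpa only [map_add, adjoint_comp, adjoint_adjoint, map_zero] using this
  constructor
  · intro m
    by_cases hm : 1 ≤ ∑ k, m k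
    · rw [← map_sum, ← grAb_decomp A P m hm h]
      exact hh.1 m
    · rw [filter_empty_of m hm, Finset.sum_empty]
  · intro n
    by_cases hn : 1 ≤ ∑ k, n k
    · have hAA : adjoint A (A h) = h := by
        have := congrArg (fun T : H →L[ℂ] H => T h) hU4
        simp only [ContinuousLinearMap.add_apply, ContinuousLinearMap.mul_apply,
          ContinuousLinearMap.comp_apply, ContinuousLinearMap.one_apply] at this
        rwa [hCh, map_zero, add_zero] at this
      rw [grAb_decomp (adjoint A) P n hn (A h), map_sum]
      simp only [hAA]
      exact hh.2 n
    · rw [eq_zero_fun_of n hn, grAb_zero, ContinuousLinearMap.one_apply]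
      have := congrArg (fun T : H →L[ℂ] E => T h) hadj5
      simp only [ContinuousLinearMap.add_apply, ContinuousLinearMap.comp_apply,
        ContinuousLinearMap.zero_apply] at this
      rwa [hCh, map_zero, add_zero] at this

lemma mem_scc_of_Astar
    (hU1 : A * adjoint A + B ∘L adjoint B = 1)
    (hU2 : A ∘L adjoint C + B ∘L adjoint D = 0)
    {h : H} (hh : h ∈ ssccKer A P B C) : adjoint A h ∈ sccKer A P B C := by
  have hBh : adjoint B h = 0 := sscc_B P A B C hh
  have hadj2 : C ∘L adjoint A + D ∘L adjoint B = 0 := by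
    have := congrArg (ContinuousLinearMap.adjoint) hU2
    simpa only [map_add, adjoint_comp, adjoint_adjoint, map_zero] using this
  constructor
  · intro n
    by_cases hn : 1 ≤ ∑ k, n k
    · have hAA : A (adjoint A h) = h := by
        have := congrArg (fun T : H →L[ℂ] H => T h) hU1
        simp only [ContinuousLinearMap.add_apply, ContinuousLinearMap.mul_apply,
          ContinuousLinearMap.comp_apply, ContinuousLinearMap.one_apply] at this
        rwa [hBh, map_zero, add_zero] at this
      rw [grAb_decomp A P n hn (adjoint A h)]
      rw [map_sum]
      simp only [hAA]
      exact hh.1 n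
    · rw [eq_zero_fun_of n hn, grAb_zero, ContinuousLinearMap.one_apply]
      have := congrArg (fun T : H →L[ℂ] F => T h) hadj2
      simp only [ContinuousLinearMap.add_apply, ContinuousLinearMap.comp_apply,
        ContinuousLinearMap.zero_apply] at this
      rwa [hBh, map_zero, add_zero] at this
  · intro m
    by_cases hm : 1 ≤ ∑ k, m k
    · rw [← map_sum, ← grAb_decomp (adjoint A) P m hm h]
      exact hh.2 m
    · rw [filter_empty_of m hm, Finset.sum_empty]

end Main

section Invar

variable (P : Fin d → H →L[ℂ] H) (A : H →L[ℂ] H) (B : E →L[ℂ] H) (C : H →L[ℂ] F)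

lemma proj_collapse {β : Type*} [AddCommMonoid β]
    (hPidem : ∀ k, P k * P k = P k) (hPorth : ∀ j k, j ≠ k → P j * P k = 0)
    (j : Fin d) (h : H) (n : Fin d → ℕ)
    (g : Fin d → H → β) (hg : ∀ k, g k 0 = 0) :
    (∑ k ∈ Finset.univ.filter fun k => 1 ≤ n k + (if k = j then 1 else 0),
       g k (P k (P j h))) = g j (P j h) := by
  rw [Finset.sum_eq_single_of_mem j (by simp) ?_]
  · congr 1
    have := congrArg (fun T : H →L[ℂ] H => T h) (hPidem j)
    simpa using this
  · intro k _ hkj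
    have hz : P k (P j h) = 0 := by
      have := congrArg (fun T : H →L[ℂ] H => T h) (hPorth k j hkj)
      simpa using this
    rw [hz, hg k]

lemma add_ite_sub_ite (n : Fin d → ℕ) (j : Fin d) :
    (fun i => (n i + if i = j then 1 else 0) - if i = j then 1 else 0) = n := by
  funext i; omega

lemma scc_subset_sscc (hPsum : ∑ k, P k = 1)
    (hPidem : ∀ k, P k * P k = P k) (hPorth : ∀ j k, j ≠ k → P j * P k = 0)
    (hPN : ∀ k, ∀ x ∈ sccKer A P B C, P k x ∈ sccKer A P B C)
    {h : H} (hh : h ∈ sccKer A P B C) : h ∈ ssccKer A P B C := by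
  constructor
  · intro m
    exact Finset.sum_eq_zero fun k _ => (hPN k h hh).1 _
  · intro n
    conv_lhs => rw [← sum_proj_apply P hPsum h]
    rw [map_sum, map_sum]
    refine Finset.sum_eq_zero fun j _ => ?_
    have h2 := (hPN j h hh).2 (fun i => n i + if i = j then 1 else 0)
    rw [proj_collapse P hPidem hPorth j h n
      (fun k y => adjoint B (grAb (adjoint A) P
        (fun i => (n i + if i = j then 1 else 0) - if i = k then 1 else 0) y))
      (fun k => by simp)] at h2
    rwa [add_ite_sub_ite] at h2

lemma sscc_subset_scc (hPsum : ∑ k, P k = 1)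
    (hPidem : ∀ k, P k * P k = P k) (hPorth : ∀ j k, j ≠ k → P j * P k = 0)
    (hPN' : ∀ k, ∀ x ∈ ssccKer A P B C, P k x ∈ ssccKer A P B C)
    {h : H} (hh : h ∈ ssccKer A P B C) : h ∈ sccKer A P B C := by
  constructor
  · intro n
    conv_lhs => rw [← sum_proj_apply P hPsum h]
    rw [map_sum, map_sum]
    refine Finset.sum_eq_zero fun j _ => ?_
    have h2 := (hPN' j h hh).1 (fun i => n i + if i = j then 1 else 0)
    rw [proj_collapse P hPidem hPorth j h n
      (fun k y => C (grAb A P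
        (fun i => (n i + if i = j then 1 else 0) - if i = k then 1 else 0) y))
      (fun k => by simp)] at h2
    rwa [add_ite_sub_ite] at h2
  · intro m
    exact Finset.sum_eq_zero fun k _ => (hPN' k h hh).2 _

end Invar

section CC

variable (P : Fin d → H →L[ℂ] H) (A : H →L[ℂ] H) (B : E →L[ℂ] H) (C : H →L[ℂ] F)

lemma ccSpace_isClosed : IsClosed ((ccSpace A P B C : Set H)) := by
  rw [ccSpace, Submodule.coe_sInf]
  exact isClosed_biInter fun M hM => hM.1

lemma ccSpace_ranB (e : E) : B e ∈ ccSpace A P B C :=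
  Submodule.mem_sInf.mpr fun M hM => hM.2.1 ⟨e, rfl⟩

lemma ccSpace_ranCstar (f : F) : adjoint C f ∈ ccSpace A P B C :=
  Submodule.mem_sInf.mpr fun M hM => hM.2.2.1 ⟨f, rfl⟩

lemma ccSpace_A {x : H} (hx : x ∈ ccSpace A P B C) : A x ∈ ccSpace A P B C :=
  Submodule.mem_sInf.mpr fun M hM => hM.2.2.2.1 x (Submodule.mem_sInf.mp hx M hM)

lemma ccSpace_Astar {x : H} (hx : x ∈ ccSpace A P B C) :
    adjoint A x ∈ ccSpace A P B C :=
  Submodule.mem_sInf.mpr fun M hM => hM.2.2.2.2.1 x (Submodule.mem_sInf.mp hx M hM)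

lemma ccSpace_P {x : H} (k : Fin d) (hx : x ∈ ccSpace A P B C) :
    P k x ∈ ccSpace A P B C :=
  Submodule.mem_sInf.mpr fun M hM => hM.2.2.2.2.2 k x (Submodule.mem_sInf.mp hx M hM)

lemma orth_A {x : H} (hx : x ∈ (ccSpace A P B C)ᗮ) : A x ∈ (ccSpace A P B C)ᗮ := by
  rw [Submodule.mem_orthogonal] at hx ⊢
  intro u hu
  rw [← adjoint_inner_left]
  exact hx _ (ccSpace_Astar P A B C hu)

lemma orth_Astar {x : H} (hx : x ∈ (ccSpace A P B C)ᗮ) :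
    adjoint A x ∈ (ccSpace A P B C)ᗮ := by
  rw [Submodule.mem_orthogonal] at hx ⊢
  intro u hu
  rw [adjoint_inner_right]
  exact hx _ (ccSpace_A P A B C hu)

lemma orth_P (hPsa : ∀ k, IsSelfAdjoint (P k)) {x : H} (k : Fin d)
    (hx : x ∈ (ccSpace A P B C)ᗮ) : P k x ∈ (ccSpace A P B C)ᗮ := by
  rw [Submodule.mem_orthogonal] at hx ⊢
  intro u hu
  have hPk := ContinuousLinearMap.isSelfAdjoint_iff'.mp (hPsa k)
  calc (inner ℂ u (P k x) : ℂ) = inner ℂ (adjoint (P k) u) x := (adjoint_inner_left (P k) x u).symm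
    _ = inner ℂ (P k u) x := by rw [hPk]
    _ = 0 := hx _ (ccSpace_P P A B C k hu)

lemma orth_C {x : H} (hx : x ∈ (ccSpace A P B C)ᗮ) : C x = 0 := by
  have h0 : (inner ℂ (C x) (C x) : ℂ) = 0 := by
    rw [← adjoint_inner_left]
    exact Submodule.inner_right_of_mem_orthogonal (ccSpace_ranCstar P A B C (C x)) hx
  exact inner_self_eq_zero.mp h0

lemma orth_Bstar {x : H} (hx : x ∈ (ccSpace A P B C)ᗮ) : adjoint B x = 0 := by
  have h0 : (inner ℂ (adjoint B x) (adjoint B x) : ℂ) = 0 := by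
    rw [adjoint_inner_left]
    exact Submodule.inner_left_of_mem_orthogonal (ccSpace_ranB P A B C (adjoint B x)) hx
  exact inner_self_eq_zero.mp h0

lemma orth_subset_scc (hPsa : ∀ k, IsSelfAdjoint (P k)) {x : H}
    (hx : x ∈ (ccSpace A P B C)ᗮ) : x ∈ sccKer A P B C := by
  constructor
  · intro n
    exact orth_C P A B C (grAb_mem P A (fun y hy => orth_A P A B C hy)
      (fun k y hy => orth_P P A B C hPsa k hy) n x hx)
  · intro m
    refine Finset.sum_eq_zero fun k _ => ?_
    exact orth_Bstar P A B C (grAb_mem P (adjoint A)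
      (fun y hy => orth_Astar P A B C hy)
      (fun k y hy => orth_P P A B C hPsa k hy) _ _
      (orth_P P A B C hPsa k hx))

lemma orth_subset_sscc (hPsa : ∀ k, IsSelfAdjoint (P k)) {x : H}
    (hx : x ∈ (ccSpace A P B C)ᗮ) : x ∈ ssccKer A P B C := by
  constructor
  · intro m
    refine Finset.sum_eq_zero fun k _ => ?_
    exact orth_C P A B C (grAb_mem P A (fun y hy => orth_A P A B C hy)
      (fun k y hy => orth_P P A B C hPsa k hy) _ _
      (orth_P P A B C hPsa k hx))
  · intro n
    exact orth_Bstar P A B C (grAb_mem P (adjoint A)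
      (fun y hy => orth_Astar P A B C hy)
      (fun k y hy => orth_P P A B C hPsa k hy) n x hx)

end CC

lemma inter_eq_zero_iff {S T : Set H} (h0S : (0:H) ∈ S) (h0T : (0:H) ∈ T) :
    S ∩ T = {0} ↔ ∀ x ∈ S, x ∈ T → x = 0 := by
  constructor
  · intro h x hxS hxT
    have : x ∈ S ∩ T := ⟨hxS, hxT⟩
    rw [h] at this
    exact this
  · intro h
    ext x
    simp only [Set.mem_inter_iff, Set.mem_singleton_iff]
    exact ⟨fun ⟨a, b⟩ => h x a b, fun hx => hx ▸ ⟨h0S, h0T⟩⟩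


/-- **Equivalence of strict close-connectedness and shifted strict close-connectedness
relative to the closely connected subspace.**  For a GR-unitary colligation the
following are equivalent: (1) `H_cc ∩ N = {0}`; (2) `H_cc ∩ N' = {0}`;
(3) `N` and `N'` are both invariant under every projection `P_k`. -/
theorem scc_iff_sscc_iff_proj_invariant
    (hd : 0 < d)
    (P : Fin d → H →L[ℂ] H)
    (hPsa : ∀ k, IsSelfAdjoint (P k))
    (hPidem : ∀ k, P k * P k = P k)
    (hPorth : ∀ j k, j ≠ k → P j * P k = 0)
    (hPsum : ∑ k, P k = 1)
    (A : H →L[ℂ] H) (B : E →L[ℂ] H) (C : H →L[ℂ] F) (D : E →L[ℂ] F)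
    (hU1 : A * adjoint A + B ∘L adjoint B = 1)
    (hU2 : A ∘L adjoint C + B ∘L adjoint D = 0)
    (hU3 : C ∘L adjoint C + D ∘L adjoint D = 1)
    (hU4 : adjoint A * A + adjoint C ∘L C = 1)
    (hU5 : adjoint A ∘L B + adjoint C ∘L D = 0)
    (hU6 : adjoint B ∘L B + adjoint D ∘L D = 1) :
    ((ccSpace A P B C : Set H) ∩ sccKer A P B C = {0} ↔
      (ccSpace A P B C : Set H) ∩ ssccKer A P B C = {0}) ∧
    ((ccSpace A P B C : Set H) ∩ sccKer A P B C = {0} ↔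
      ∀ k, (P k) '' sccKer A P B C ⊆ sccKer A P B C ∧
        (P k) '' ssccKer A P B C ⊆ ssccKer A P B C) := by
  have h0cc : (0:H) ∈ (ccSpace A P B C : Set H) := (ccSpace A P B C).zero_mem
  have key12 : ((ccSpace A P B C : Set H) ∩ sccKer A P B C = {0} ↔
      (ccSpace A P B C : Set H) ∩ ssccKer A P B C = {0}) := by
    rw [inter_eq_zero_iff h0cc (scc_zero P A B C),
      inter_eq_zero_iff h0cc (sscc_zero P A B C)]
    constructor
    · intro h1 x hxcc hxN'
      have hAx : adjoint A x = 0 :=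
        h1 _ (ccSpace_Astar P A B C hxcc) (mem_scc_of_Astar P A B C D hU1 hU2 hxN')
      have hBx : adjoint B x = 0 := sscc_B P A B C hxN'
      have hx := congrArg (fun T : H →L[ℂ] H => T x) hU1
      simp only [ContinuousLinearMap.add_apply, ContinuousLinearMap.mul_apply,
        ContinuousLinearMap.comp_apply, ContinuousLinearMap.one_apply] at hx
      rw [hAx, hBx, map_zero, map_zero, add_zero] at hx
      exact hx.symm
    · intro h2 x hxcc hxN
      have hAx : A x = 0 :=
        h2 _ (ccSpace_A P A B C hxcc) (mem_sscc_of_A P A B C D hU4 hU5 hxN)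
      have hCx : C x = 0 := scc_C P A B C hxN
      have hx := congrArg (fun T : H →L[ℂ] H => T x) hU4
      simp only [ContinuousLinearMap.add_apply, ContinuousLinearMap.mul_apply,
        ContinuousLinearMap.comp_apply, ContinuousLinearMap.one_apply] at hx
      rw [hAx, hCx, map_zero, map_zero, add_zero] at hx
      exact hx.symm
  refine ⟨key12, ?_, ?_⟩
  · intro h1
    have h2 := key12.mp h1
    rw [inter_eq_zero_iff h0cc (scc_zero P A B C)] at h1
    rw [inter_eq_zero_iff h0cc (sscc_zero P A B C)] at h2
    haveI : CompleteSpace (ccSpace A P B C) :=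
      (ccSpace_isClosed P A B C).completeSpace_coe
    have horthN : ∀ h ∈ sccKer A P B C, h ∈ (ccSpace A P B C)ᗮ := by
      intro h hh
      obtain ⟨p, hp, q, hq, hpq⟩ :=
        Submodule.exists_add_mem_mem_orthogonal (K := ccSpace A P B C) h
      have hqN : q ∈ sccKer A P B C := orth_subset_scc P A B C hPsa hq
      have hpN : p ∈ sccKer A P B C := by
        have hp' : p = h - q := by rw [hpq]; abel
        rw [hp']
        exact scc_sub P A B C hh hqN
      have hp0 : p = 0 := h1 p hp hpN
      rw [hpq, hp0, zero_add]
      exact hq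
    have horthN' : ∀ h ∈ ssccKer A P B C, h ∈ (ccSpace A P B C)ᗮ := by
      intro h hh
      obtain ⟨p, hp, q, hq, hpq⟩ :=
        Submodule.exists_add_mem_mem_orthogonal (K := ccSpace A P B C) h
      have hqN : q ∈ ssccKer A P B C := orth_subset_sscc P A B C hPsa hq
      have hpN : p ∈ ssccKer A P B C := by
        have hp' : p = h - q := by rw [hpq]; abel
        rw [hp']
        exact sscc_sub P A B C hh hqN
      have hp0 : p = 0 := h2 p hp hpN
      rw [hpq, hp0, zero_add]
      exact hq
    intro k
    constructor
    · rintro y ⟨h, hh, rfl⟩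
      exact orth_subset_scc P A B C hPsa (orth_P P A B C hPsa k (horthN h hh))
    · rintro y ⟨h, hh, rfl⟩
      exact orth_subset_sscc P A B C hPsa (orth_P P A B C hPsa k (horthN' h hh))
  · intro h3
    rw [inter_eq_zero_iff h0cc (scc_zero P A B C)]
    intro x hxcc hxN
    have hPN : ∀ k, ∀ y ∈ sccKer A P B C, P k y ∈ sccKer A P B C :=
      fun k y hy => (h3 k).1 ⟨y, hy, rfl⟩
    have hPN' : ∀ k, ∀ y ∈ ssccKer A P B C, P k y ∈ ssccKer A P B C :=
      fun k y hy => (h3 k).2 ⟨y, hy, rfl⟩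
    have hNA : ∀ y ∈ sccKer A P B C, A y ∈ sccKer A P B C := fun y hy =>
      sscc_subset_scc P A B C hPsum hPidem hPorth hPN'
        (mem_sscc_of_A P A B C D hU4 hU5 hy)
    have hNAstar : ∀ y ∈ sccKer A P B C, adjoint A y ∈ sccKer A P B C := fun y hy =>
      mem_scc_of_Astar P A B C D hU1 hU2
        (scc_subset_sscc P A B C hPsum hPidem hPorth hPN hy)
    let Mo : Submodule ℂ H :=
      { carrier := {y | ∀ h ∈ sccKer A P B C, (inner ℂ h y : ℂ) = 0}
        add_mem' := fun ha hb h hh => by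
          rw [inner_add_right, ha h hh, hb h hh, add_zero]
        zero_mem' := fun h _ => inner_zero_right h
        smul_mem' := fun c y hy h hh => by
          rw [inner_smul_right, hy h hh, mul_zero] }
    have hMoClosed : IsClosed (Mo : Set H) := by
      have hM : (Mo : Set H) = ⋂ h ∈ sccKer A P B C, {y | (inner ℂ h y : ℂ) = 0} := by
        ext y
        simp only [Set.mem_iInter, Set.mem_setOf_eq]
        rfl
      rw [hM]
      exact isClosed_biInter fun h _ =>
        isClosed_eq (continuous_const.inner continuous_id) continuous_const
    have hMoS : ccSpace A P B C ≤ Mo := by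
      apply sInf_le
      refine ⟨hMoClosed, ?_, ?_, ?_, ?_, ?_⟩
      · rintro y ⟨e, rfl⟩ h hh
        rw [ContinuousLinearMap.coe_coe, ← adjoint_inner_left, scc_B P A B C hPsum hh, inner_zero_left]
      · rintro y ⟨f, rfl⟩ h hh
        rw [ContinuousLinearMap.coe_coe, adjoint_inner_right, scc_C P A B C hh, inner_zero_left]
      · intro y hy h hh
        rw [← adjoint_inner_left]
        exact hy _ (hNAstar h hh)
      · intro y hy h hh
        rw [adjoint_inner_right]
        exact hy _ (hNA h hh)
      · intro k y hy h hh
        have hPk := ContinuousLinearMap.isSelfAdjoint_iff'.mp (hPsa k)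
        calc (inner ℂ h (P k y) : ℂ)
            = inner ℂ (adjoint (P k) h) y := (adjoint_inner_left (P k) y h).symm
          _ = inner ℂ (P k h) y := by rw [hPk]
          _ = 0 := hy _ (hPN k h hh)
    have hxMo : x ∈ Mo := hMoS hxcc
    exact inner_self_eq_zero.mp (hxMo x hxN)
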